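/- Let ι be a type and X, R : ι → ℝ functions, and let c ∈ ℝ be any constant. Define the constant-c imputed covariate X^c : ι → ℝ by X^c(i) = X(i)·R(i) + c·(1 − R(i)). Then the ℝ-linear span of the set of functions {1, R, X^c} (where 1 denotes the constant function one) in the space ι → ℝ equals the ℝ-linear span of {1, R, X·R}. In particular, regression adjustment using the design columns (1, R, X^c) spans the same column space as imputing the missing covariate values by zero. -/

import Mathlib

/-- Imputing a partially observed covariate `X` by any constant `c` yields a
design with the same column space as imputing by zero: the span of
`{1, R, X^c}` equals the span of `{1, R, X·R}`, where
`X^c i = X i * R i + c * (1 - R i)`. -/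
theorem span_constant_imputation_eq_span_zero_imputation
    {ι : Type*} (X R : ι → ℝ) (c : ℝ)
    (Xc : ι → ℝ) (hXc : Xc = fun i => X i * R i + c * (1 - R i)) :
    Submodule.span ℝ ({(fun _ => 1), R, Xc} : Set (ι → ℝ)) =
      Submodule.span ℝ ({(fun _ => 1), R, fun i => X i * R i} : Set (ι → ℝ)) := by
  subst hXc
  have h1 : ((fun _ => 1) : ι → ℝ) ∈ Submodule.span ℝ
      ({(fun _ => 1), R, fun i => X i * R i} : Set (ι → ℝ)) :=
    Submodule.subset_span (by simp)
  have hR : R ∈ Submodule.span ℝ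
      ({(fun _ => 1), R, fun i => X i * R i} : Set (ι → ℝ)) :=
    Submodule.subset_span (by simp)
  have hXR : (fun i => X i * R i) ∈ Submodule.span ℝ
      ({(fun _ => 1), R, fun i => X i * R i} : Set (ι → ℝ)) :=
    Submodule.subset_span (by simp)
  have h1' : ((fun _ => 1) : ι → ℝ) ∈ Submodule.span ℝ
      ({(fun _ => 1), R, fun i => X i * R i + c * (1 - R i)} : Set (ι → ℝ)) :=
    Submodule.subset_span (by simp)
  have hR' : R ∈ Submodule.span ℝ
      ({(fun _ => 1), R, fun i => X i * R i + c * (1 - R i)} : Set (ι → ℝ)) :=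
    Submodule.subset_span (by simp)
  have hXc' : (fun i => X i * R i + c * (1 - R i)) ∈ Submodule.span ℝ
      ({(fun _ => 1), R, fun i => X i * R i + c * (1 - R i)} : Set (ι → ℝ)) :=
    Submodule.subset_span (by simp)
  apply le_antisymm
  · rw [Submodule.span_le]
    rintro f (rfl | rfl | rfl)
    · exact h1
    · exact hR
    · have := Submodule.add_mem _ (Submodule.add_mem _ hXR
        (Submodule.smul_mem _ c h1)) (Submodule.smul_mem _ (-c) hR)
      rw [SetLike.mem_coe]
      convert this using 1
      funext i
      simp [smul_eq_mul]
      ring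
  · rw [Submodule.span_le]
    rintro f (rfl | rfl | rfl)
    · exact h1'
    · exact hR'
    · have := Submodule.add_mem _ (Submodule.add_mem _ hXc'
        (Submodule.smul_mem _ (-c) h1')) (Submodule.smul_mem _ c hR')
      rw [SetLike.mem_coe]
      convert this using 1
      funext i
      simp [smul_eq_mul]
      ring
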